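/- Let ρ ≥ 5/log 5, N = N_ρ, and x₁ > x₂ as in the superchampion setup, with B₁ = min(x₂² − 2x₂, x₁/2 − √x₁) > 0. If M is a positive integer with ben(M) < B₁, then v_p(M) ≤ 1 for every prime p ≥ √x₁. -/

import Mathlib

/-- ℓ(M): the sum of the prime powers in the standard factorization of M. -/
def ell (M : ℕ) : ℕ := ∑ p ∈ M.primeFactors, p ^ M.factorization p

/-- The benefit of M with respect to the superchampion N associated to ρ. -/
noncomputable def ben (ρ : ℝ) (N M : ℕ) : ℝ :=
  (ell M : ℝ) - (ell N : ℝ) - ρ * (Real.log M - Real.log N)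

/-- The contribution of the prime power `q^n` to `ℓ(K) - ρ log K`. -/
noncomputable def Fb (ρ : ℝ) (q n : ℕ) : ℝ :=
  (if n = 0 then 0 else (q : ℝ) ^ n) - ρ * n * Real.log q

lemma ell_decomp (ρ : ℝ) (K : ℕ) (hK : 0 < K) (S : Finset ℕ) (hS : K.primeFactors ⊆ S) :
    (ell K : ℝ) - ρ * Real.log K = ∑ q ∈ S, Fb ρ q (K.factorization q) := by
  have hzero : ∀ q ∈ S, q ∉ K.primeFactors → Fb ρ q (K.factorization q) = 0 := by
    intro q _ hq
    have h0 : K.factorization q = 0 := by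
      rw [← Nat.support_factorization] at hq
      exact Finsupp.notMem_support_iff.mp hq
    simp [Fb, h0]
  rw [← Finset.sum_subset hS hzero]
  have hlog : Real.log K = ∑ q ∈ K.primeFactors, (K.factorization q : ℝ) * Real.log q := by
    have hprodN : ∏ q ∈ K.primeFactors, q ^ K.factorization q = K := by
      rw [← Nat.support_factorization]
      exact Nat.factorization_prod_pow_eq_self hK.ne'
    have hprod : (K : ℝ) = ∏ q ∈ K.primeFactors, (q : ℝ) ^ K.factorization q := by
      conv_lhs => rw [← hprodN]
      push_cast
      rfl
    rw [hprod, Real.log_prod]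
    · exact Finset.sum_congr rfl fun q hq => by rw [Real.log_pow]
    · intro q hq
      exact pow_ne_zero _ (Nat.cast_ne_zero.mpr (Nat.prime_of_mem_primeFactors hq).pos.ne')
  rw [hlog, ell]
  push_cast
  rw [Finset.mul_sum, ← Finset.sum_sub_distrib]
  refine Finset.sum_congr rfl fun q hq => ?_
  have hq0 : K.factorization q ≠ 0 := by
    rw [← Nat.support_factorization] at hq; exact Finsupp.mem_support_iff.mp hq
  simp only [Fb, hq0, if_false]
  ring

lemma Fb_min (ρ : ℝ) (q : ℕ) (hq : q.Prime) (v : ℕ)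
    (h1 : 1 ≤ v ↔ (q : ℝ) / Real.log q < ρ)
    (h2 : ∀ i : ℕ, 2 ≤ i → (i ≤ v ↔ ((q : ℝ) ^ i - (q : ℝ) ^ (i - 1)) / Real.log q < ρ)) :
    ∀ n, Fb ρ q v ≤ Fb ρ q n := by
  have hq1 : (1 : ℝ) < q := by exact_mod_cast hq.one_lt
  have hlq : 0 < Real.log q := Real.log_pos hq1
  -- going up above v
  have step_up : ∀ i : ℕ, v ≤ i → Fb ρ q i ≤ Fb ρ q (i + 1) := by
    intro i hi
    rcases Nat.eq_zero_or_pos i with rfl | hipos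
    · -- i = 0, so v = 0 and ¬ (1 ≤ v)
      have hv0 : ¬ (1 ≤ v) := by omega
      have h := (not_iff_not.mpr h1).mp hv0
      push_neg at h
      have hle : ρ * Real.log q ≤ (q : ℝ) := by
        rw [le_div_iff₀ hlq] at h; linarith
      simp only [Fb]
      norm_num
      linarith
    · have h2i : 2 ≤ i + 1 := by omega
      have hnot : ¬ (i + 1 ≤ v) := by omega
      have h := (not_iff_not.mpr (h2 (i + 1) h2i)).mp hnot
      push_neg at h
      have hle : ρ * Real.log q ≤ (q : ℝ) ^ (i + 1) - (q : ℝ) ^ i := by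
        rw [le_div_iff₀ hlq] at h
        simpa using h
      have hi0 : i ≠ 0 := hipos.ne'
      simp only [Fb, hi0, if_false, Nat.succ_ne_zero]
      push_cast
      nlinarith [hle]
  -- going down below v
  have step_down : ∀ i : ℕ, i + 1 ≤ v → Fb ρ q (i + 1) ≤ Fb ρ q i := by
    intro i hi
    rcases Nat.eq_zero_or_pos i with rfl | hipos
    · have h := h1.mp (by omega)
      rw [div_lt_iff₀ hlq] at h
      simp only [Fb]
      norm_num
      linarith
    · have h2i : 2 ≤ i + 1 := by omega
      have h := (h2 (i + 1) h2i).mp hi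
      rw [div_lt_iff₀ hlq] at h
      simp only [Nat.add_sub_cancel] at h
      have hi0 : i ≠ 0 := hipos.ne'
      simp only [Fb, hi0, if_false, Nat.succ_ne_zero]
      push_cast
      nlinarith [h]
  -- min at v, upward
  have up : ∀ n, v ≤ n → Fb ρ q v ≤ Fb ρ q n := by
    intro n hn
    induction n, hn using Nat.le_induction with
    | base => exact le_refl _
    | succ n hn ih => exact le_trans ih (step_up n hn)
  -- min at v, downward
  have down : ∀ m : ℕ, Fb ρ q v ≤ Fb ρ q (v - m) := by
    intro m
    induction m with
    | zero => simp
    | succ m ih =>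
      rcases Nat.lt_or_ge m v with hm | hm
      · rcases Nat.exists_eq_add_of_le (Nat.succ_le_of_lt hm) with ⟨c, hc⟩
        have hsub : v - m = (v - (m + 1)) + 1 := by omega
        have hstep := step_down (v - (m + 1)) (by omega)
        rw [hsub] at ih
        exact le_trans ih hstep
      · have : v - m = 0 := by omega
        have h2 : v - (m + 1) = 0 := by omega
        rw [h2, ← this]
        exact ih
  intro n
  rcases le_or_gt v n with h | h
  · exact up n h
  · have := down (v - n)
    rwa [Nat.sub_sub_self h.le] at this

lemma pow_lb (x : ℝ) (hx : 2 ≤ x) : ∀ k : ℕ, 2 ≤ k → x ^ 2 + ((k : ℝ) - 2) * (x ^ 2 - x) ≤ x ^ k := by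
  intro k hk
  induction k, hk using Nat.le_induction with
  | base => norm_num
  | succ k hk ih =>
    have hxk : x ^ 2 ≤ x ^ k := pow_le_pow_right₀ (by linarith) hk
    have hx1 : (0:ℝ) ≤ x - 1 := by linarith
    have h1 : (x - 1) * x ^ 2 ≤ (x - 1) * x ^ k := by nlinarith
    have hpow : x ^ (k + 1) = x * x ^ k := by ring
    push_cast
    nlinarith [ih, h1, hxk]

set_option maxHeartbeats 2000000 in
theorem small_benefit_large_primes_squarefree (ρ x₁ x₂ : ℝ)
    (hρ : 5 / Real.log 5 ≤ ρ)
    (hx₁e : Real.exp 1 ≤ x₁) (hx₁ : x₁ / Real.log x₁ = ρ)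
    (hx₂1 : 1 < x₂) (hx₂ : (x₂ ^ 2 - x₂) / Real.log x₂ = ρ)
    (N : ℕ) (hN : 0 < N)
    (hNfac : ∀ p : ℕ, p.Prime →
      (1 ≤ N.factorization p ↔ (p : ℝ) / Real.log p < ρ) ∧
      (∀ i : ℕ, 2 ≤ i →
        (i ≤ N.factorization p ↔
          ((p : ℝ) ^ i - (p : ℝ) ^ (i - 1)) / Real.log p < ρ)))
    (M : ℕ) (hM : 0 < M)
    (hben : ben ρ N M < min (x₂ ^ 2 - 2 * x₂) (x₁ / 2 - Real.sqrt x₁)) :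
    ∀ p : ℕ, p.Prime → Real.sqrt x₁ ≤ (p : ℝ) → M.factorization p ≤ 1 := by
  intro p hp hps
  by_contra hcon
  push_neg at hcon
  have hk2 : 2 ≤ M.factorization p := hcon
  set s : ℝ := Real.sqrt x₁ with hs_def
  set L : ℝ := Real.log x₁ with hL_def
  have hx₁pos : 0 < x₁ := lt_of_lt_of_le (Real.exp_pos 1) hx₁e
  have hL1 : 1 ≤ L := by
    have := Real.log_le_log (Real.exp_pos 1) hx₁e
    rwa [Real.log_exp] at this
  have hρL : ρ * L = x₁ := by
    field_simp at hx₁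
    linarith [hx₁]
  have hs0 : 0 < s := Real.sqrt_pos.mpr hx₁pos
  have hss : s * s = x₁ := Real.mul_self_sqrt hx₁pos.le
  have hlogs : Real.log s = L / 2 := Real.log_sqrt hx₁pos.le
  have hρpos : 0 < ρ := by
    rw [← hx₁]; positivity
  have hpR : (2 : ℝ) ≤ (p : ℝ) := by exact_mod_cast hp.two_le
  have hlp : 0 < Real.log p := Real.log_pos (by linarith)
  -- log p ≤ L/2 + (p - s)/s
  have hlogp : Real.log p ≤ L / 2 + ((p : ℝ) - s) / s := by
    have h0 : 0 < (p : ℝ) / s := by positivity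
    have h := Real.log_le_sub_one_of_pos h0
    rw [Real.log_div (by linarith) hs0.ne'] at h
    have h' : (p : ℝ) / s - 1 = ((p : ℝ) - s) / s := by field_simp
    rw [h'] at h
    linarith [h, hlogs]
  -- key: ρ log p ≤ s p - s²/2
  have hρs : ρ ≤ s * s := by nlinarith [hρL, hL1, hρpos]
  have hkey : ρ * Real.log p ≤ s * (p : ℝ) - s * s / 2 := by
    have h1 : ρ * Real.log p ≤ ρ * (L / 2 + ((p : ℝ) - s) / s) :=
      mul_le_mul_of_nonneg_left hlogp hρpos.le
    have hfrac : (0:ℝ) ≤ ((p : ℝ) - s) / s := by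
      apply div_nonneg (by linarith) hs0.le
    have h2 : ρ * (((p : ℝ) - s) / s) ≤ (s * s) * (((p : ℝ) - s) / s) :=
      mul_le_mul_of_nonneg_right hρs hfrac
    have h3 : (s * s) * (((p : ℝ) - s) / s) = s * ((p : ℝ) - s) := by
      field_simp
    have h4 : ρ * (L / 2) = x₁ / 2 := by linarith [hρL]
    nlinarith [h1, h2, h3, h4, hss]
  -- v := N.factorization p ≤ 1
  have hv2 : ¬ (2 ≤ N.factorization p) := by
    intro h2v
    have h := ((hNfac p hp).2 2 le_rfl).mp h2v
    rw [div_lt_iff₀ hlp] at h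
    norm_num at h
    nlinarith [h, hkey, sq_nonneg ((p : ℝ) - s), mul_nonneg (by linarith : (0:ℝ) ≤ (p:ℝ)) (by linarith : (0:ℝ) ≤ (p:ℝ) - 2)]
  have hdelta2 : ρ * Real.log p ≤ (p : ℝ) ^ 2 - (p : ℝ) := by
    have h := (not_iff_not.mpr ((hNfac p hp).2 2 le_rfl)).mp hv2
    push_neg at h
    rw [le_div_iff₀ hlp] at h
    norm_num at h
    linarith [h]
  -- Fb p v ≤ Fb p 1
  have hFv : Fb ρ p (N.factorization p) ≤ Fb ρ p 1 := by
    interval_cases hv : N.factorization p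
    · -- v = 0
      have h := (not_iff_not.mpr (hNfac p hp).1).mp (by omega)
      push_neg at h
      rw [le_div_iff₀ hlp] at h
      simp only [Fb]
      norm_num
      linarith
    · exact le_refl _
  -- Fb p 2 ≤ Fb p k
  have hFk : Fb ρ p 2 ≤ Fb ρ p (M.factorization p) := by
    set k := M.factorization p with hk_def
    have hpow := pow_lb (p : ℝ) hpR k hk2
    have hknn : (0:ℝ) ≤ (k : ℝ) - 2 := by
      have : (2:ℝ) ≤ (k:ℝ) := by exact_mod_cast hk2
      linarith
    have hmul : ((k : ℝ) - 2) * (ρ * Real.log p) ≤ ((k : ℝ) - 2) * ((p : ℝ) ^ 2 - (p : ℝ)) :=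
      mul_le_mul_of_nonneg_left hdelta2 hknn
    have hk0 : k ≠ 0 := by omega
    simp only [Fb, hk0, if_false]
    norm_num
    linarith [hpow, hmul]
  -- ben ≥ Fb p k - Fb p v
  set S : Finset ℕ := M.primeFactors ∪ N.primeFactors with hS_def
  have hMS : M.primeFactors ⊆ S := Finset.subset_union_left
  have hNS : N.primeFactors ⊆ S := Finset.subset_union_right
  have hbeneq : ben ρ N M = ∑ q ∈ S, (Fb ρ q (M.factorization q) - Fb ρ q (N.factorization q)) := by
    rw [Finset.sum_sub_distrib, ← ell_decomp ρ M hM S hMS, ← ell_decomp ρ N hN S hNS]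
    simp only [ben]
    ring
  have hterm : ∀ q ∈ S, 0 ≤ Fb ρ q (M.factorization q) - Fb ρ q (N.factorization q) := by
    intro q hq
    have hqp : q.Prime := by
      rcases Finset.mem_union.mp hq with h | h
      · exact Nat.prime_of_mem_primeFactors h
      · exact Nat.prime_of_mem_primeFactors h
    have := Fb_min ρ q hqp (N.factorization q) (hNfac q hqp).1 (hNfac q hqp).2 (M.factorization q)
    linarith
  have hpS : p ∈ S := by
    apply hMS
    rw [Nat.mem_primeFactors]
    exact ⟨hp, Nat.dvd_of_factorization_pos (by omega), hM.ne'⟩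
  have hsingle : Fb ρ p (M.factorization p) - Fb ρ p (N.factorization p) ≤ ben ρ N M := by
    rw [hbeneq]
    exact Finset.single_le_sum hterm hpS
  -- conclude
  have hF21 : Fb ρ p 2 - Fb ρ p 1 = (p : ℝ) ^ 2 - (p : ℝ) - ρ * Real.log p := by
    simp only [Fb]
    norm_num
    ring
  have hfinal : x₁ / 2 - s ≤ (p : ℝ) ^ 2 - (p : ℝ) - ρ * Real.log p := by
    have hprod : 0 ≤ ((p : ℝ) - s) * ((p : ℝ) - 1) :=
      mul_nonneg (by linarith) (by linarith)
    nlinarith [hkey, hprod, hss]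
  have hmin : min (x₂ ^ 2 - 2 * x₂) (x₁ / 2 - Real.sqrt x₁) ≤ x₁ / 2 - s := min_le_right _ _
  linarith [hsingle, hFv, hFk, hben, hmin, hF21, hfinal]
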